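/- For every p > 1, one has 2p/(p−1) < h(p), where h(p) = p/(p−1) + ((p+1)/(p−1))·(√(2p/(p+1)) + √(2p/(p+1) − √(2p/(p+1))) − 1/2). -/

import Mathlib

noncomputable def h (p : ℝ) : ℝ :=
  p / (p - 1) + ((p + 1) / (p - 1)) *
    (Real.sqrt (2 * p / (p + 1)) +
      Real.sqrt (2 * p / (p + 1) - Real.sqrt (2 * p / (p + 1))) - 1 / 2)

theorem h_improves (p : ℝ) (hp : 1 < p) : 2 * p / (p - 1) < h p := by
  have hp1 : (0:ℝ) < p + 1 := by linarith
  have hpm : (0:ℝ) < p - 1 := by linarith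
  unfold h
  set s : ℝ := 2 * p / (p + 1) with hs
  have hs1 : 1 < s := by rw [hs, lt_div_iff₀ hp1]; linarith
  have hs2 : s < 2 := by rw [hs, div_lt_iff₀ hp1]; linarith
  set t : ℝ := Real.sqrt s with ht
  have ht2 : t ^ 2 = s := Real.sq_sqrt (by linarith)
  have ht0 : 0 ≤ t := Real.sqrt_nonneg s
  have ht1 : 1 < t := by nlinarith
  have htlt : t < 3 / 2 := by nlinarith
  have hst : 0 ≤ s - t := by nlinarith
  set u : ℝ := Real.sqrt (s - t) with hu
  have hu2 : u ^ 2 = s - t := Real.sq_sqrt hst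
  have hu0 : 0 ≤ u := Real.sqrt_nonneg _
  have key : s / 2 + 1 / 2 < t + u := by
    nlinarith [sq_nonneg (u - (t - 1) ^ 2 / 2), sq_nonneg (t - 1), sq_nonneg u]
  have hsp : s / 2 = p / (p + 1) := by rw [hs]; ring
  have e : p / (p + 1) + 1 / 2 < t + u := by rw [← hsp]; exact key
  have e2 : p < (p + 1) * (t + u - 1 / 2) := by
    have h3 := mul_lt_mul_of_pos_left e hp1
    have h4 : (p + 1) * (p / (p + 1)) = p := by field_simp
    nlinarith
  rw [div_mul_eq_mul_div, ← add_div, div_lt_div_iff₀ hpm hpm]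
  nlinarith
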